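/- Let f, g : ℝⁿ → ℝ be quadratic forms. Then f is strictly copositive with g (i.e., g(x) ≥ 0 and x ≠ 0 imply f(x) > 0) if and only if there exists ξ > 0 such that f(x) − ξ·g(x) > 0 for all nonzero x ∈ ℝⁿ. -/

import Mathlib

open Matrix


lemma quad_expand {n : ℕ} (A : Matrix (Fin n) (Fin n) ℝ) (s : ℝ) (x y : Fin n → ℝ) :
    (s • x + y) ⬝ᵥ A.mulVec (s • x + y) =
      s^2 * (x ⬝ᵥ A.mulVec x) + s * (x ⬝ᵥ A.mulVec y + y ⬝ᵥ A.mulVec x) + y ⬝ᵥ A.mulVec y := by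
  simp [Matrix.mulVec_add, Matrix.mulVec_smul, dotProduct_add, add_dotProduct,
    smul_dotProduct, dotProduct_smul, smul_eq_mul]
  ring

lemma quad_smul {n : ℕ} (A : Matrix (Fin n) (Fin n) ℝ) (r : ℝ) (x : Fin n → ℝ) :
    (r • x) ⬝ᵥ A.mulVec (r • x) = r^2 * (x ⬝ᵥ A.mulVec x) := by
  simp [Matrix.mulVec_smul, smul_dotProduct, dotProduct_smul, smul_eq_mul]
  ring



private lemma root_key (a b c d P Q : ℝ) (hc : c < 0) (hd : 0 < d) (hcon : a * d ≤ b * c) :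
    ∃ s : ℝ, c * s^2 + Q * s + d = 0 ∧ a * s^2 + P * s + b ≤ 0 := by
  have hcd : c * d < 0 := mul_neg_of_neg_of_pos hc hd
  have hdisc : 0 < Q^2 - 4*(c*d) := by nlinarith [sq_nonneg Q]
  set e := Real.sqrt (Q^2 - 4*(c*d)) with he
  have he2 : e^2 = Q^2 - 4*(c*d) := Real.sq_sqrt hdisc.le
  have hepos : 0 < e := Real.sqrt_pos.mpr hdisc
  have h2c : (2*c) ≠ 0 := by intro h; nlinarith [h]
  have hcne : (4*c) ≠ 0 := by intro h; nlinarith [h]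
  obtain ⟨s1, hc1⟩ : ∃ s1 : ℝ, 2*c*s1 = -Q - e := ⟨(-Q - e)/(2*c), mul_div_cancel₀ _ h2c⟩
  obtain ⟨s2, hc2⟩ : ∃ s2 : ℝ, 2*c*s2 = -Q + e := ⟨(-Q + e)/(2*c), mul_div_cancel₀ _ h2c⟩
  have hroot1 : c * s1^2 + Q * s1 + d = 0 := by
    have h1 : 4*c*(c * s1^2 + Q * s1 + d) = (2*c*s1)^2 + 2*Q*(2*c*s1) + 4*(c*d) := by ring
    rw [hc1] at h1
    have h0 : 4*c*(c * s1^2 + Q * s1 + d) = 0 := by rw [h1]; linear_combination he2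
    exact (mul_eq_zero.mp h0).resolve_left hcne
  have hroot2 : c * s2^2 + Q * s2 + d = 0 := by
    have h1 : 4*c*(c * s2^2 + Q * s2 + d) = (2*c*s2)^2 + 2*Q*(2*c*s2) + 4*(c*d) := by ring
    rw [hc2] at h1
    have h0 : 4*c*(c * s2^2 + Q * s2 + d) = 0 := by rw [h1]; linear_combination he2
    exact (mul_eq_zero.mp h0).resolve_left hcne
  have h4 : (2*c)*(2*c)*(s1*s2) = Q^2 - e^2 := by
    have : (2*c*s1)*(2*c*s2) = (-Q-e)*(-Q+e) := by rw [hc1, hc2]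
    nlinarith [this]
  have hprod : s1 * s2 < 0 := by nlinarith [sq_nonneg (2*c), h4, he2]
  have hdiff : 2*c*(s1 - s2) = -2*e := by nlinarith [hc1, hc2]
  have hlt : s2 < s1 := by nlinarith [hdiff, mul_pos (mul_pos two_pos hepos) (neg_pos.mpr hc)]
  have hs1pos : 0 < s1 := by nlinarith
  have hs2neg : s2 < 0 := by nlinarith
  rcases le_or_gt 0 (P*c - a*Q) with h | h
  · refine ⟨s1, hroot1, ?_⟩
    have key : c * (a * s1^2 + P * s1 + b) = (P*c - a*Q) * s1 + (b*c - a*d) := by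
      linear_combination a * hroot1
    nlinarith [mul_nonneg h hs1pos.le]
  · refine ⟨s2, hroot2, ?_⟩
    have key : c * (a * s2^2 + P * s2 + b) = (P*c - a*Q) * s2 + (b*c - a*d) := by
      linear_combination a * hroot2
    nlinarith [mul_nonneg (neg_nonneg.mpr h.le) (neg_nonneg.mpr hs2neg.le)]

lemma ratio_lt {n : ℕ} {f g : (Fin n → ℝ) → ℝ} {A B : Matrix (Fin n) (Fin n) ℝ}
    (hf : ∀ x, f x = dotProduct x (A.mulVec x))
    (hg : ∀ x, g x = dotProduct x (B.mulVec x))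
    (hcop : ∀ x : Fin n → ℝ, g x ≥ 0 → x ≠ 0 → f x > 0)
    {x y : Fin n → ℝ} (hx : g x < 0) (hy : 0 < g y) :
    f y * g x < f x * g y := by
  by_contra hcon
  push_neg at hcon
  obtain ⟨s, hroot, hneg⟩ := root_key (f x) (f y) (g x) (g y)
    (x ⬝ᵥ A.mulVec y + y ⬝ᵥ A.mulVec x) (x ⬝ᵥ B.mulVec y + y ⬝ᵥ B.mulVec x) hx hy hcon
  set z : Fin n → ℝ := s • x + y with hz
  have hgz : g z = 0 := by
    rw [hz, hg, quad_expand, ← hg x, ← hg y]; linarith [hroot]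
  have hfz : f z ≤ 0 := by
    rw [hz, hf, quad_expand, ← hf x, ← hf y]; linarith [hneg]
  have hzne : z ≠ 0 := by
    intro h0
    have hy' : y = (-s) • x := by
      funext i
      have h1 := congrFun h0 i
      simp only [hz, Pi.add_apply, Pi.smul_apply, smul_eq_mul, Pi.zero_apply] at h1 ⊢
      linarith
    have : g y = (-s)^2 * g x := by rw [hy', hg, quad_smul, ← hg x]
    nlinarith [sq_nonneg s]
  exact absurd (hcop z hgz.ge hzne) (not_lt.mpr hfz)

lemma quad_cont {n : ℕ} (A : Matrix (Fin n) (Fin n) ℝ) :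
    Continuous fun x : Fin n → ℝ => x ⬝ᵥ A.mulVec x := by
  simp only [dotProduct, Matrix.mulVec]
  fun_prop

lemma forward {n : ℕ} {f g : (Fin n → ℝ) → ℝ} {A B : Matrix (Fin n) (Fin n) ℝ}
    (hf : ∀ x, f x = dotProduct x (A.mulVec x))
    (hg : ∀ x, g x = dotProduct x (B.mulVec x))
    (hcop : ∀ x : Fin n → ℝ, g x ≥ 0 → x ≠ 0 → f x > 0) :
    ∃ ξ : ℝ, ξ > 0 ∧ ∀ u : Fin n → ℝ, ‖u‖ = 1 → f u - ξ * g u > 0 := by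
  have cf : Continuous f := by
    have : f = fun x => x ⬝ᵥ A.mulVec x := funext hf
    rw [this]; exact quad_cont A
  have cg : Continuous g := by
    have : g = fun x => x ⬝ᵥ B.mulVec x := funext hg
    rw [this]; exact quad_cont B
  set S : Set (Fin n → ℝ) := Metric.sphere 0 1 with hS
  have hScomp : IsCompact S := isCompact_sphere 0 1
  have hmem : ∀ u : Fin n → ℝ, u ∈ S ↔ ‖u‖ = 1 := fun u => mem_sphere_zero_iff_norm
  have hne : ∀ u ∈ S, u ≠ 0 := by
    intro u hu h0
    rw [hmem] at hu; rw [h0] at hu; simp at hu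
  have hpos : ∀ u ∈ S, 0 ≤ g u → 0 < f u := fun u hu h => hcop u h (hne u hu)
  suffices h : ∃ ξ : ℝ, ξ > 0 ∧ ∀ u ∈ S, f u - ξ * g u > 0 by
    obtain ⟨ξ, h1, h2⟩ := h
    exact ⟨ξ, h1, fun u hu => h2 u ((hmem u).mpr hu)⟩
  by_cases hW : ∃ y ∈ S, 0 < g y
  · -- main case
    obtain ⟨y₁, hy₁S, hy₁⟩ := hW
    have hfy₁ : 0 < f y₁ := hpos y₁ hy₁S hy₁.le
    set t : ℝ := f y₁ / g y₁ + 1 with ht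
    have hty₁ : t * g y₁ = f y₁ + g y₁ := by
      rw [ht, add_mul, one_mul, div_mul_cancel₀ _ hy₁.ne']
    set Cp : Set (Fin n → ℝ) := S ∩ {y | f y ≤ t * g y} with hCp
    have hCpcomp : IsCompact Cp :=
      hScomp.inter_right (isClosed_le cf (continuous_const.mul cg))
    have hCpPos : ∀ y ∈ Cp, 0 < g y := by
      rintro y ⟨hyS, hyle⟩
      simp only [Set.mem_setOf_eq] at hyle
      rcases lt_trichotomy (g y) 0 with h | h | h
      · exfalso
        have hrl := ratio_lt hf hg hcop h hy₁
        nlinarith [mul_le_mul_of_nonneg_right hyle hy₁.le]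
      · exfalso
        have hfypos := hpos y hyS h.ge
        rw [h, mul_zero] at hyle; linarith
      · exact h
    have hy₁Cp : y₁ ∈ Cp := ⟨hy₁S, show f y₁ ≤ t * g y₁ by linarith⟩
    have hratio : ContinuousOn (fun y => f y / g y) Cp :=
      cf.continuousOn.div cg.continuousOn (fun y hy => (hCpPos y hy).ne')
    obtain ⟨ys, hysCp, hysmin'⟩ := hCpcomp.exists_isMinOn ⟨y₁, hy₁Cp⟩ hratio
    have hysmin : ∀ y ∈ Cp, f ys / g ys ≤ f y / g y := fun y hy => hysmin' hy
    set ξ₀ : ℝ := f ys / g ys with hξ₀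
    have hgys : 0 < g ys := hCpPos ys hysCp
    have hfys : 0 < f ys := hpos ys hysCp.1 hgys.le
    have hξ₀pos : 0 < ξ₀ := div_pos hfys hgys
    have hWmin : ∀ y ∈ S, 0 < g y → ξ₀ ≤ f y / g y := by
      intro y hyS hgy
      by_cases hyCp : y ∈ Cp
      · exact hysmin y hyCp
      · have hgt : t * g y < f y := by
          by_contra hle
          push_neg at hle
          exact hyCp ⟨hyS, hle⟩
        have h1 : ξ₀ ≤ f y₁ / g y₁ := hysmin y₁ hy₁Cp
        have h2 : f y₁ / g y₁ < t := by rw [ht]; linarith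
        have h3 : t < f y / g y := by rw [lt_div_iff₀ hgy]; linarith
        linarith
    by_cases hD : ∃ x ∈ S, g x < 0
    · obtain ⟨x₁, hx₁S, hx₁⟩ := hD
      set t' : ℝ := f x₁ / g x₁ with ht'
      have hx₁eq : f x₁ = t' * g x₁ := by rw [ht', div_mul_cancel₀ _ hx₁.ne]
      have ht'lt : t' < ξ₀ := by
        have hrl := ratio_lt hf hg hcop hx₁ hgys
        have key : ξ₀ - t' = (f ys * g x₁ - g ys * f x₁) / (g ys * g x₁) :=
          div_sub_div (f ys) (f x₁) hgys.ne' hx₁.ne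
        have : 0 < ξ₀ - t' := by
          rw [key]
          exact div_pos_of_neg_of_neg (by linarith) (mul_neg_of_pos_of_neg hgys hx₁)
        linarith
      set Cm : Set (Fin n → ℝ) := S ∩ {x | f x ≤ t' * g x} with hCm
      have hCmcomp : IsCompact Cm :=
        hScomp.inter_right (isClosed_le cf (continuous_const.mul cg))
      have hCmNeg : ∀ x ∈ Cm, g x < 0 := by
        rintro x ⟨hxS, hxle⟩
        simp only [Set.mem_setOf_eq] at hxle
        rcases lt_trichotomy (g x) 0 with h | h | h
        · exact h
        · exfalso; have := hpos x hxS h.ge; rw [h, mul_zero] at hxle; linarith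
        · exfalso
          have h1 := hWmin x hxS h
          rw [le_div_iff₀ h] at h1
          nlinarith
      have hx₁Cm : x₁ ∈ Cm := ⟨hx₁S, show f x₁ ≤ t' * g x₁ by linarith⟩
      have hratio' : ContinuousOn (fun x => f x / g x) Cm :=
        cf.continuousOn.div cg.continuousOn (fun x hx => (hCmNeg x hx).ne)
      obtain ⟨xs, hxsCm, hxsmax'⟩ := hCmcomp.exists_isMaxOn ⟨x₁, hx₁Cm⟩ hratio'
      have hxsmax : ∀ x ∈ Cm, f x / g x ≤ f xs / g xs := fun x hx => hxsmax' hx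
      set ξ₁ : ℝ := f xs / g xs with hξ₁
      have hgxs : g xs < 0 := hCmNeg xs hxsCm
      have hDmax : ∀ x ∈ S, g x < 0 → f x / g x ≤ ξ₁ := by
        intro x hxS hgx
        by_cases hxCm : x ∈ Cm
        · exact hxsmax x hxCm
        · have hgt : t' * g x < f x := by
            by_contra hle
            push_neg at hle
            exact hxCm ⟨hxS, hle⟩
          have h1 : f x / g x < t' := by rw [div_lt_iff_of_neg hgx]; linarith
          have h2 : t' ≤ ξ₁ := by
            have := hxsmax x₁ hx₁Cm
            rw [← ht'] at this
            exact this
          linarith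
      have hgap : ξ₁ < ξ₀ := by
        have hrl := ratio_lt hf hg hcop hgxs hgys
        have key : ξ₀ - ξ₁ = (f ys * g xs - g ys * f xs) / (g ys * g xs) :=
          div_sub_div (f ys) (f xs) hgys.ne' hgxs.ne
        have : 0 < ξ₀ - ξ₁ := by
          rw [key]
          exact div_pos_of_neg_of_neg (by linarith) (mul_neg_of_pos_of_neg hgys hgxs)
        linarith
      set ξ : ℝ := (max ξ₁ 0 + ξ₀)/2 with hξ
      have hmaxlt : max ξ₁ 0 < ξ₀ := max_lt hgap hξ₀pos
      have hξpos : 0 < ξ := by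
        have : (0:ℝ) ≤ max ξ₁ 0 := le_max_right _ _
        rw [hξ]; linarith
      have hξlt : ξ < ξ₀ := by rw [hξ]; linarith
      have hξgt : ξ₁ < ξ := by
        have : ξ₁ ≤ max ξ₁ 0 := le_max_left _ _
        rw [hξ]; linarith
      refine ⟨ξ, hξpos, ?_⟩
      intro u huS
      rcases lt_trichotomy (g u) 0 with h | h | h
      · have h1 : f u / g u < ξ := lt_of_le_of_lt (hDmax u huS h) hξgt
        rw [div_lt_iff_of_neg h] at h1
        linarith
      · have := hpos u huS h.ge
        rw [h]; linarith
      · have h1 : ξ < f u / g u := lt_of_lt_of_le hξlt (hWmin u huS h)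
        rw [lt_div_iff₀ h] at h1
        linarith
    · -- no negative g on S
      push_neg at hD
      refine ⟨ξ₀/2, by linarith, ?_⟩
      intro u huS
      rcases eq_or_lt_of_le (hD u huS) with h | h
      · have := hpos u huS h.le
        rw [← h]; linarith
      · have h1 : ξ₀/2 < f u / g u := lt_of_lt_of_le (by linarith) (hWmin u huS h)
        rw [lt_div_iff₀ h] at h1
        linarith
  · -- g ≤ 0 on all of S
    push_neg at hW
    set V : Set (Fin n → ℝ) := S ∩ {u | f u ≤ 0} with hV
    have hVcomp : IsCompact V :=
      hScomp.inter_right (isClosed_le cf continuous_const)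
    by_cases hVne : V.Nonempty
    · have hVneg : ∀ u ∈ V, g u < 0 := by
        rintro u ⟨huS, hule⟩
        simp only [Set.mem_setOf_eq] at hule
        rcases eq_or_lt_of_le (hW u huS) with h | h
        · exfalso; have := hpos u huS h.ge; linarith
        · exact h
      obtain ⟨w, hwV, hwmax'⟩ := hVcomp.exists_isMaxOn hVne cg.continuousOn
      have hwmax : ∀ u ∈ V, g u ≤ g w := fun u hu => hwmax' hu
      set ε : ℝ := -g w with hε
      have hεpos : 0 < ε := by rw [hε]; linarith [hVneg w hwV]
      obtain ⟨v₀, hv₀⟩ := hVne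
      obtain ⟨m, hmS, hmmin'⟩ := hScomp.exists_isMinOn ⟨v₀, hv₀.1⟩ cf.continuousOn
      have hmmin : ∀ u ∈ S, f m ≤ f u := fun u hu => hmmin' hu
      set ξ : ℝ := (1 + max (-f m) 0)/ε with hξ
      have hξpos : 0 < ξ := by
        apply div_pos _ hεpos
        have : (0:ℝ) ≤ max (-f m) 0 := le_max_right _ _
        linarith
      refine ⟨ξ, hξpos, ?_⟩
      intro u huS
      by_cases hfu : 0 < f u
      · have : 0 ≤ ξ * (-g u) := mul_nonneg hξpos.le (by linarith [hW u huS])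
        linarith
      · push_neg at hfu
        have huV : u ∈ V := ⟨huS, hfu⟩
        have hgu : g u ≤ -ε := by
          have := hwmax u huV
          rw [hε]; linarith
        have hmf : f m ≤ f u := hmmin u huS
        have hξε : ξ * ε = 1 + max (-f m) 0 := div_mul_cancel₀ _ hεpos.ne'
        have h1 : ξ * ε ≤ ξ * (-g u) := by
          apply mul_le_mul_of_nonneg_left _ hξpos.le
          linarith
        have h2 : -f m ≤ max (-f m) 0 := le_max_left _ _
        linarith
    · -- f > 0 on all of S
      refine ⟨1, one_pos, ?_⟩
      intro u huS
      have hfu : 0 < f u := by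
        by_contra hle
        push_neg at hle
        exact hVne ⟨u, huS, hle⟩
      linarith [hW u huS]

theorem strict_s_lemma (n : ℕ) (f g : (Fin n → ℝ) → ℝ)
    (A B : Matrix (Fin n) (Fin n) ℝ) (hA : A.IsSymm) (hB : B.IsSymm)
    (hf : ∀ x, f x = dotProduct x (A.mulVec x))
    (hg : ∀ x, g x = dotProduct x (B.mulVec x)) :
    (∀ x : Fin n → ℝ, g x ≥ 0 → x ≠ 0 → f x > 0) ↔
      ∃ ξ : ℝ, ξ > 0 ∧ ∀ x : Fin n → ℝ, x ≠ 0 → f x - ξ * g x > 0 := by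
  constructor
  · intro hcop
    obtain ⟨ξ, hξpos, hSph⟩ := forward hf hg hcop
    refine ⟨ξ, hξpos, ?_⟩
    intro x hx
    have hr : 0 < ‖x‖ := norm_pos_iff.mpr hx
    obtain ⟨u, huu⟩ : ∃ u : Fin n → ℝ, u = ‖x‖⁻¹ • x := ⟨_, rfl⟩
    have hun : ‖u‖ = 1 := by
      rw [huu, norm_smul, norm_inv, norm_norm, inv_mul_cancel₀ hr.ne']
    have hxu : x = ‖x‖ • u := by rw [huu, smul_inv_smul₀ hr.ne']
    have hfx : f (‖x‖ • u) = ‖x‖^2 * f u := by rw [hf, hf, quad_smul]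
    have hgx : g (‖x‖ • u) = ‖x‖^2 * g u := by rw [hg, hg, quad_smul]
    have h1 : f x = ‖x‖^2 * f u := by rw [← hfx, ← hxu]
    have h2 : g x = ‖x‖^2 * g u := by rw [← hgx, ← hxu]
    have hcalc : f x - ξ * g x = ‖x‖^2 * (f u - ξ * g u) := by
      rw [h1, h2]; ring
    rw [hcalc]
    exact mul_pos (by positivity) (hSph u hun)
  · rintro ⟨ξ, hξpos, h⟩ x hgx hx
    have := h x hx
    nlinarith [mul_nonneg hξpos.le hgx]
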